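/- In the finitary symmetric group S_ℕ, the normalizer of the alternating subgroup S⁻(B) (finitely supported even permutations of an infinite set B ⊆ ℕ, fixing the complement pointwise) equals {g ∈ S_ℕ : g(B) = B}; in particular, if B has infinite complement or |B| ≥ 2, S⁻(B) is not self-normalizing since S⁺(B) ⊆ N(S⁻(B)) and S⁺(B) ≠ S⁻(B). -/

import Mathlib

/-- The support of a product is contained in the union of supports. -/
theorem supp_mul_subset (a b : Equiv.Perm ℕ) :
    {x | (a * b) x ≠ x} ⊆ {x | a x ≠ x} ∪ {x | b x ≠ x} := by
  intro x hx
  by_contra h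
  simp only [Set.mem_union, Set.mem_setOf_eq, not_or, not_not] at h
  exact hx (by simp [Equiv.Perm.mul_apply, h.2, h.1])

theorem supp_inv_eq (a : Equiv.Perm ℕ) : {x | a⁻¹ x ≠ x} = {x | a x ≠ x} := by
  ext x
  simp only [Set.mem_setOf_eq, ne_eq, Equiv.Perm.inv_eq_iff_eq]
  exact not_congr eq_comm

/-- `S⁺(B)`: the group of finitely supported permutations of `ℕ` whose support
is contained in `B`. -/
def Splus (B : Set ℕ) : Subgroup (Equiv.Perm ℕ) where
  carrier := {g | {x | g x ≠ x}.Finite ∧ ∀ x, g x ≠ x → x ∈ B}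
  one_mem' := by simp
  mul_mem' := by
    rintro a b ⟨ha1, ha2⟩ ⟨hb1, hb2⟩
    refine ⟨(ha1.union hb1).subset (supp_mul_subset a b), fun x hx => ?_⟩
    rcases supp_mul_subset a b hx with h | h
    · exact ha2 x h
    · exact hb2 x h
  inv_mem' := by
    rintro a ⟨ha1, ha2⟩
    constructor
    · rw [supp_inv_eq]
      exact ha1
    · intro x hx
      have hx' : x ∈ {x | a x ≠ x} :=
        supp_inv_eq a ▸ (hx : x ∈ {x | a⁻¹ x ≠ x})
      exact ha2 x hx'

/-- `S_ℕ`: the group of all finitely supported permutations of `ℕ`. -/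
def SN : Subgroup (Equiv.Perm ℕ) := Splus Set.univ

/-- `S⁻(B)`: the finitary alternating group on `B`, generated by the products of
two transpositions of elements of `B`. -/
def Sminus (B : Set ℕ) : Subgroup (Equiv.Perm ℕ) :=
  Subgroup.closure {g | ∃ a b c d : ℕ, a ∈ B ∧ b ∈ B ∧ c ∈ B ∧ d ∈ B ∧
    a ≠ b ∧ c ≠ d ∧ g = Equiv.swap a b * Equiv.swap c d}


section Aux10

open Equiv

theorem supp_swap_subset' (a b : ℕ) :
    {x | (Equiv.swap a b) x ≠ x} ⊆ {a, b} := by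
  intro x hx
  by_contra h
  simp only [Set.mem_insert_iff, Set.mem_singleton_iff, not_or] at h
  exact hx (Equiv.swap_apply_of_ne_of_ne h.1 h.2)

theorem swap_mem_splus {s : Set ℕ} {a b : ℕ} (ha : a ∈ s) (hb : b ∈ s) :
    Equiv.swap a b ∈ Splus s := by
  refine ⟨(Set.toFinite {a, b}).subset (supp_swap_subset' a b), fun x hx => ?_⟩
  rcases supp_swap_subset' a b hx with h | h
  · exact h ▸ ha
  · exact h ▸ hb

theorem sminus_le_splus (B : Set ℕ) : Sminus B ≤ Splus B := by
  rw [Sminus, Subgroup.closure_le]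
  rintro g ⟨a, b, c, d, ha, hb, hc, hd, hab, hcd, rfl⟩
  exact mul_mem (swap_mem_splus ha hb) (swap_mem_splus hc hd)

theorem conj_sminus {B : Set ℕ} {g : Equiv.Perm ℕ} (hg : ∀ x ∈ B, g x ∈ B) :
    ∀ n ∈ Sminus B, g * n * g⁻¹ ∈ Sminus B := by
  intro n hn
  refine Subgroup.closure_induction (p := fun x _ => g * x * g⁻¹ ∈ Sminus B)
    ?_ (by simpa using one_mem (Sminus B)) ?_ ?_ hn
  · rintro x ⟨a, b, c, d, ha, hb, hc, hd, hab, hcd, rfl⟩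
    have key : g * (Equiv.swap a b * Equiv.swap c d) * g⁻¹ =
        (g * Equiv.swap a b * g⁻¹) * (g * Equiv.swap c d * g⁻¹) := by group
    rw [key, ← Equiv.swap_apply_apply, ← Equiv.swap_apply_apply]
    exact Subgroup.subset_closure ⟨g a, g b, g c, g d, hg a ha, hg b hb, hg c hc, hg d hd,
      g.injective.ne hab, g.injective.ne hcd, rfl⟩
  · intro x y _ _ ihx ihy
    have key : g * (x * y) * g⁻¹ = (g * x * g⁻¹) * (g * y * g⁻¹) := by group
    exact key ▸ mul_mem ihx ihy
  · intro x _ ihx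
    have key : g * x⁻¹ * g⁻¹ = (g * x * g⁻¹)⁻¹ := by group
    exact key ▸ inv_mem ihx

theorem normalizer_maps {B : Set ℕ} (hB : B.Infinite) {g : Equiv.Perm ℕ}
    (hg : g ∈ Subgroup.normalizer (Sminus B : Set (Equiv.Perm ℕ))) : ∀ b ∈ B, g b ∈ B := by
  intro b hb
  obtain ⟨c, hc⟩ := (hB.diff (Set.finite_singleton b)).nonempty
  obtain ⟨d, hd⟩ := (hB.diff (Set.toFinite ({b, c} : Set ℕ))).nonempty
  have hbc : b ≠ c := fun h => hc.2 (h ▸ rfl)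
  have hcd : c ≠ d := fun h => hd.2 (by simp [← h])
  have hbd : b ≠ d := fun h => hd.2 (by simp [← h])
  have h0 : Equiv.swap b c * Equiv.swap c d ∈ Sminus B :=
    Subgroup.subset_closure ⟨b, c, c, d, hb, hc.1, hc.1, hd.1, hbc, hcd, rfl⟩
  have h1 : g * (Equiv.swap b c * Equiv.swap c d) * g⁻¹ ∈ Sminus B :=
    (Subgroup.mem_normalizer_iff.mp hg _).mp h0
  have h2 := (sminus_le_splus B h1).2 (g b)
  apply h2
  have : (Equiv.swap b c * Equiv.swap c d) b = c := by
    simp [Equiv.Perm.mul_apply, Equiv.swap_apply_of_ne_of_ne hbc hbd]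
  simp only [Equiv.Perm.mul_apply, Equiv.Perm.inv_def, Equiv.symm_apply_apply]
  rw [show (Equiv.swap c d) b = b from Equiv.swap_apply_of_ne_of_ne hbc hbd,
    Equiv.swap_apply_left]
  exact g.injective.ne (Ne.symm hbc)

theorem mem_iff_of_supp {g : Equiv.Perm ℕ} {T : Finset ℕ} (h : ∀ x, g x ≠ x → x ∈ T) :
    ∀ x, x ∈ T ↔ g x ∈ T := by
  intro x
  constructor
  · intro hx
    by_cases he : g x = x
    · rwa [he]
    · exact h (g x) fun hc => he (g.injective hc)
  · intro hgx
    by_cases he : g x = x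
    · rwa [← he]
    · exact h x he

/-- The sign of a permutation supported on a finite set `T`, computed by
restricting to `T`. -/
noncomputable def signOn (T : Finset ℕ) : Splus (↑T : Set ℕ) →* ℤˣ where
  toFun g := Equiv.Perm.sign
    (g.1.subtypePerm (p := fun x => x ∈ T) (fun x => (mem_iff_of_supp g.2.2 x).symm))
  map_one' := by exact map_one Equiv.Perm.sign
  map_mul' a b := by exact (map_mul Equiv.Perm.sign
    ((a : Equiv.Perm ℕ).subtypePerm (fun x => (mem_iff_of_supp a.2.2 x).symm))
    ((b : Equiv.Perm ℕ).subtypePerm (fun x => (mem_iff_of_supp b.2.2 x).symm)))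

theorem signOn_swap {T : Finset ℕ} {a b : ℕ} (ha : a ∈ T) (hb : b ∈ T) (hab : a ≠ b)
    (hmem : Equiv.swap a b ∈ Splus (↑T : Set ℕ)) :
    signOn T ⟨Equiv.swap a b, hmem⟩ = -1 := by
  have key : (Equiv.swap a b).subtypePerm (p := fun x => x ∈ T) (fun x => (mem_iff_of_supp hmem.2 x).symm) =
      Equiv.swap ⟨a, ha⟩ ⟨b, hb⟩ := by
    ext ⟨x, hx⟩
    simp only [Equiv.Perm.subtypePerm_apply, Equiv.swap_apply_def, Subtype.ext_iff]
    split_ifs <;> rfl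
  show Equiv.Perm.sign _ = -1
  rw [key]
  exact Equiv.Perm.sign_swap (by simp [Subtype.ext_iff, hab])

set_option maxHeartbeats 1000000 in
theorem signOn_list (T : Finset ℕ) (l : List (ℕ × ℕ))
    (h1 : ∀ pq ∈ l, pq.1 ≠ pq.2) (h2 : ∀ pq ∈ l, pq.1 ∈ T ∧ pq.2 ∈ T)
    (hmem : (l.map fun pq => Equiv.swap pq.1 pq.2).prod ∈ Splus (↑T : Set ℕ)) :
    signOn T ⟨(l.map fun pq => Equiv.swap pq.1 pq.2).prod, hmem⟩ = (-1) ^ l.length := by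
  induction l with
  | nil =>
      simp only [List.map_nil, List.prod_nil, List.length_nil, pow_zero]
      exact map_one (signOn T)
  | cons pq l ih =>
      have hsw : Equiv.swap pq.1 pq.2 ∈ Splus (↑T : Set ℕ) :=
        swap_mem_splus (Finset.mem_coe.mpr (h2 pq List.mem_cons_self).1)
          (Finset.mem_coe.mpr (h2 pq List.mem_cons_self).2)
      have hrest : (l.map fun pq => Equiv.swap pq.1 pq.2).prod ∈ Splus (↑T : Set ℕ) := by
        have : (l.map fun pq => Equiv.swap pq.1 pq.2).prod =
            (Equiv.swap pq.1 pq.2)⁻¹ * (((pq :: l).map fun pq => Equiv.swap pq.1 pq.2).prod) := by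
          simp [List.map_cons, List.prod_cons]
        rw [this]
        exact mul_mem (inv_mem hsw) hmem
      have key : (⟨((pq :: l).map fun pq => Equiv.swap pq.1 pq.2).prod, hmem⟩ :
          Splus (↑T : Set ℕ)) =
          ⟨Equiv.swap pq.1 pq.2, hsw⟩ *
          ⟨(l.map fun pq => Equiv.swap pq.1 pq.2).prod, hrest⟩ := by
        apply Subtype.ext
        simp [List.map_cons, List.prod_cons]
      rw [key, map_mul,
        signOn_swap (h2 pq List.mem_cons_self).1 (h2 pq List.mem_cons_self).2
          (h1 pq List.mem_cons_self) hsw,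
        ih (fun x hx => h1 x (List.mem_cons_of_mem _ hx))
          (fun x hx => h2 x (List.mem_cons_of_mem _ hx)) hrest,
        List.length_cons, pow_succ]
      exact (mul_comm _ _)

theorem sminus_decomp {B : Set ℕ} {g : Equiv.Perm ℕ} (hg : g ∈ Sminus B) :
    ∃ l : List (ℕ × ℕ), (∀ pq ∈ l, pq.1 ≠ pq.2) ∧
      g = (l.map fun pq => Equiv.swap pq.1 pq.2).prod ∧ Even l.length := by
  have hg' : g ∈ ((Sminus B).toSubmonoid : Submonoid (Equiv.Perm ℕ)) := hg
  rw [Sminus, Subgroup.closure_toSubmonoid] at hg'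
  obtain ⟨L, hL, hLprod⟩ := Submonoid.exists_list_of_mem_closure hg'
  clear hg hg'
  induction L generalizing g with
  | nil => exact ⟨[], by simp, by simp [← hLprod], by simp⟩
  | cons y L ih =>
      obtain ⟨l, hl1, hl2, hl3⟩ := ih (g := L.prod) (fun x hx => hL x (List.mem_cons_of_mem _ hx)) rfl
      have hy : ∃ p q r s : ℕ, p ≠ q ∧ r ≠ s ∧ y = Equiv.swap p q * Equiv.swap r s := by
        rcases hL y List.mem_cons_self with h | h
        · obtain ⟨p, q, r, s, _, _, _, _, hpq, hrs, hy⟩ := h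
          exact ⟨p, q, r, s, hpq, hrs, hy⟩
        · obtain ⟨p, q, r, s, _, _, _, _, hpq, hrs, hy⟩ := h
          refine ⟨r, s, p, q, hrs, hpq, ?_⟩
          have : y = (Equiv.swap p q * Equiv.swap r s)⁻¹ := by
            rw [← hy]; simp
          rw [this, mul_inv_rev]
          simp [Equiv.swap_inv]
      obtain ⟨p, q, r, s, hpq, hrs, hy⟩ := hy
      refine ⟨(p, q) :: (r, s) :: l, ?_, ?_, ?_⟩
      · intro x hx
        simp only [List.mem_cons] at hx
        rcases hx with rfl | rfl | hx
        · exact hpq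
        · exact hrs
        · exact hl1 x hx
      · rw [← hLprod, List.prod_cons, hy, hl2]
        simp [List.map_cons, List.prod_cons, mul_assoc]
      · simpa [Nat.even_add_one, parity_simps] using hl3

theorem swap_not_mem_sminus {B : Set ℕ} {a b : ℕ} (hab : a ≠ b) :
    Equiv.swap a b ∉ Sminus B := by
  intro hmem
  obtain ⟨l, hl1, hl2, hl3⟩ := sminus_decomp hmem
  set T : Finset ℕ := insert a (insert b
    ((l.map Prod.fst).toFinset ∪ (l.map Prod.snd).toFinset)) with hT
  have h2 : ∀ pq ∈ l, pq.1 ∈ T ∧ pq.2 ∈ T := by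
    intro pq hpq
    constructor
    · exact Finset.mem_insert.mpr (Or.inr (Finset.mem_insert.mpr (Or.inr
        (Finset.mem_union_left _ (List.mem_toFinset.mpr (List.mem_map_of_mem hpq))))))
    · exact Finset.mem_insert.mpr (Or.inr (Finset.mem_insert.mpr (Or.inr
        (Finset.mem_union_right _ (List.mem_toFinset.mpr (List.mem_map_of_mem hpq))))))
  have ha : a ∈ T := Finset.mem_insert_self _ _
  have hb : b ∈ T := Finset.mem_insert.mpr (Or.inr (Finset.mem_insert_self _ _))
  have hswT : Equiv.swap a b ∈ Splus (↑T : Set ℕ) :=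
    swap_mem_splus (Finset.mem_coe.mpr ha) (Finset.mem_coe.mpr hb)
  have hprodT : (l.map fun pq => Equiv.swap pq.1 pq.2).prod ∈ Splus (↑T : Set ℕ) := by
    rw [← hl2]; exact hswT
  have e1 : signOn T ⟨Equiv.swap a b, hswT⟩ = -1 := signOn_swap ha hb hab hswT
  have e2 : signOn T ⟨Equiv.swap a b, hswT⟩ = (-1) ^ l.length := by
    have : (⟨Equiv.swap a b, hswT⟩ : Splus (↑T : Set ℕ)) =
        ⟨(l.map fun pq => Equiv.swap pq.1 pq.2).prod, hprodT⟩ := Subtype.ext hl2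
    rw [this]
    exact signOn_list T l hl1 h2 hprodT
  rw [e1, hl3.neg_one_pow] at e2
  exact absurd e2 (by decide)

end Aux10

/-- The normalizer in `S_ℕ` of the finitary alternating group `S⁻(B)` on an
infinite set `B` equals `{g ∈ S_ℕ : g(B) = B}`; in particular `S⁻(B)` is not
self-normalizing since `S⁺(B) ⊆ N(S⁻(B))` and `S⁺(B) ≠ S⁻(B)`. -/
theorem stmt10 (B : Set ℕ) (hB : B.Infinite) :
    (∀ g ∈ SN, (g ∈ Subgroup.normalizer (Sminus B : Set (Equiv.Perm ℕ)) ↔ g '' B = B)) ∧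
    Splus B ≤ Subgroup.normalizer (Sminus B : Set (Equiv.Perm ℕ)) ∧
    Sminus B ≠ Splus B ∧
    Subgroup.normalizer (Sminus B : Set (Equiv.Perm ℕ)) ⊓ SN ≠ Sminus B := by
  obtain ⟨a, ha⟩ := hB.nonempty
  obtain ⟨b, hb⟩ := (hB.diff (Set.finite_singleton a)).nonempty
  have hab : a ≠ b := fun h => hb.2 (h ▸ rfl)
  have hswap_plus : Equiv.swap a b ∈ Splus B := swap_mem_splus ha hb.1
  have hswap_not : Equiv.swap a b ∉ Sminus B := swap_not_mem_sminus hab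
  have hnorm : ∀ g : Equiv.Perm ℕ, g '' B = B → g ∈ Subgroup.normalizer (Sminus B : Set (Equiv.Perm ℕ)) := by
    intro g him
    have hfwd : ∀ x ∈ B, g x ∈ B := fun x hx => him ▸ Set.mem_image_of_mem g hx
    have hinv : ∀ x ∈ B, g⁻¹ x ∈ B := by
      intro x hx
      rw [← him] at hx
      obtain ⟨y, hy, rfl⟩ := hx
      simpa using hy
    rw [Subgroup.mem_normalizer_iff]
    intro n
    constructor
    · exact conj_sminus hfwd n
    · intro hn
      have h2 := conj_sminus hinv _ hn
      have e : g⁻¹ * (g * n * g⁻¹) * g⁻¹⁻¹ = n := by group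
      rwa [e] at h2
  have hsplus_norm : Splus B ≤ Subgroup.normalizer (Sminus B : Set (Equiv.Perm ℕ)) := by
    intro g hg
    apply hnorm
    apply Set.Subset.antisymm
    · rintro _ ⟨x, hx, rfl⟩
      by_cases h : g x = x
      · rwa [h]
      · exact hg.2 _ fun hc => h (g.injective hc)
    · intro x hx
      refine ⟨g⁻¹ x, ?_, by simp⟩
      by_cases h2 : g⁻¹ x = x
      · rwa [h2]
      · refine hg.2 _ ?_
        rw [Equiv.Perm.inv_def, Equiv.apply_symm_apply]
        exact fun e => h2 e.symm
  refine ⟨?_, hsplus_norm, ?_, ?_⟩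
  · intro g _
    constructor
    · intro hg
      apply Set.Subset.antisymm
      · rintro _ ⟨x, hx, rfl⟩
        exact normalizer_maps hB hg x hx
      · intro x hx
        exact ⟨g⁻¹ x, normalizer_maps hB (inv_mem hg) x hx, by simp⟩
    · exact hnorm g
  · intro h
    rw [h] at hswap_not
    exact hswap_not hswap_plus
  · intro h
    apply hswap_not
    rw [← h]
    exact Subgroup.mem_inf.mpr ⟨hsplus_norm hswap_plus,
      ⟨hswap_plus.1, fun x _ => Set.mem_univ x⟩⟩
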